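/- Let A ∈ ℝ^{n×n} be symmetric with at least p negative eigenvalues λ₁ < λ₂ < ... (simple smallest eigenvalues), with orthonormal eigenvectors u₁,...,u_p. For X* = (√(-λ₁)d₁u₁, ..., √(-λ_p)d_p u_p) with d_i ∈ {±1}, the block J_{ii} = A + X*_i (X*_i)ᵀ + ((x*_i)ᵀx*_i) I + x*_i (x*_i)ᵀ of the Jacobian of g₁(X) = AX + X triu(XᵀX) equals A - U_iΛ_iU_iᵀ - λ_i I - λ_i u_i u_iᵀ and is symmetric positive definite for every i = 1,...,p. -/

import Mathlib

open Matrix Finset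

lemma conj_single {n : ℕ} (U : Matrix (Fin n) (Fin n) ℝ) (k0 : Fin n) :
    U * diagonal (fun k => if k = k0 then (1:ℝ) else 0) * Uᵀ
      = vecMulVec (fun j => U j k0) (fun j => U j k0) := by
  ext a b
  simp [Matrix.mul_apply, Matrix.diagonal_apply, vecMulVec_apply, ite_mul, mul_ite]

lemma conj_posDef {n : ℕ} {U : Matrix (Fin n) (Fin n) ℝ} (horth : U * Uᵀ = 1)
    {dv : Fin n → ℝ} (h : ∀ k, 0 < dv k) : (U * diagonal dv * Uᵀ).PosDef := by
  refine Matrix.PosDef.of_dotProduct_mulVec_pos ?_ ?_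
  · have hH : (diagonal dv).IsHermitian := by
      simp [Matrix.IsHermitian, diagonal_conjTranspose]
    show (U * diagonal dv * Uᵀ)ᴴ = _
    rw [conjTranspose_mul, conjTranspose_mul, hH.eq]
    simp [mul_assoc]
  · intro x hx
    have hy : Uᵀ *ᵥ x ≠ 0 := by
      intro h0
      apply hx
      have := congrArg (U *ᵥ ·) h0
      simpa [Matrix.mulVec_mulVec, horth] using this
    have := (Matrix.PosDef.diagonal h).dotProduct_mulVec_pos hy
    rw [star_trivial] at this ⊢
    rw [← Matrix.mulVec_mulVec, ← Matrix.mulVec_mulVec, Matrix.dotProduct_mulVec,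
      ← Matrix.mulVec_transpose]
    exact this

/-- at the stable fixed points `X* = U_p √(-Λ_p) D` of
TriOFM-(Obj1), the diagonal Jacobian blocks
`J_ii = A + X*_i(X*_i)ᵀ + (x*_iᵀx*_i)I + x*_i(x*_i)ᵀ`
equal `A - U_iΛ_iU_iᵀ - λ_i I - λ_i u_iu_iᵀ` and are symmetric positive
definite. -/
theorem stmt3 {n p : ℕ} (hpn : p ≤ n) (A U : Matrix (Fin n) (Fin n) ℝ)
    (ev : Fin n → ℝ)
    (hsymm : A.IsSymm)
    (hdecomp : A = U * Matrix.diagonal ev * Uᵀ)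
    (horth : U * Uᵀ = 1)
    (hmono : Monotone ev)
    (hsimple : ∀ i j : Fin n, (i : ℕ) < p → i < j → ev i < ev j)
    (hneg : ∀ i : Fin n, (i : ℕ) < p → ev i < 0)
    (d : Fin p → ℝ) (hd : ∀ i, d i = 1 ∨ d i = -1) :
    ∀ i : Fin p,
      let c : Fin p → Fin n := Fin.castLE hpn
      let u : Fin n → Fin n → ℝ := fun k j => U j k
      let xs : Fin p → Fin n → ℝ := fun k => (d k * Real.sqrt (-(ev (c k)))) • u (c k)
      let J : Matrix (Fin n) (Fin n) ℝ :=
        A + (∑ j ∈ Finset.univ.filter (· ≤ i), vecMulVec (xs j) (xs j))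
          + (xs i ⬝ᵥ xs i) • (1 : Matrix (Fin n) (Fin n) ℝ)
          + vecMulVec (xs i) (xs i)
      J = A - (∑ j ∈ Finset.univ.filter (· ≤ i),
              ev (c j) • vecMulVec (u (c j)) (u (c j)))
          - ev (c i) • (1 : Matrix (Fin n) (Fin n) ℝ)
          - ev (c i) • vecMulVec (u (c i)) (u (c i))
        ∧ J.PosDef := by
  intro i
  dsimp only
  set c : Fin p → Fin n := Fin.castLE hpn with hc
  set u : Fin n → Fin n → ℝ := fun k j => U j k with hu
  -- basic facts
  have hlt : ∀ j : Fin p, ((c j : Fin n) : ℕ) < p := fun j => by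
    simpa [hc] using j.isLt
  have hevneg : ∀ j : Fin p, ev (c j) < 0 := fun j => hneg (c j) (hlt j)
  have hsq : ∀ j : Fin p, (d j * Real.sqrt (-(ev (c j)))) ^ 2 = -(ev (c j)) := by
    intro j
    have h0 : (0:ℝ) ≤ -(ev (c j)) := by linarith [hevneg j]
    rcases hd j with h | h <;>
      rw [mul_pow, h, Real.sq_sqrt h0] <;> ring
  -- rewrite the rank-one terms
  have hvmv : ∀ j : Fin p,
      vecMulVec ((d j * Real.sqrt (-(ev (c j)))) • u (c j))
        ((d j * Real.sqrt (-(ev (c j)))) • u (c j))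
        = (-(ev (c j))) • vecMulVec (u (c j)) (u (c j)) := by
    intro j
    ext a b
    have := hsq j
    simp only [vecMulVec_apply, Pi.smul_apply, smul_eq_mul, Matrix.smul_apply]
    have h2 : d j * Real.sqrt (-ev (c j)) * u (c j) a * (d j * Real.sqrt (-ev (c j)) * u (c j) b)
        = (d j * Real.sqrt (-ev (c j))) ^ 2 * (u (c j) a * u (c j) b) := by ring
    rw [h2, hsq j]
  have huu : ∀ k : Fin n, (u k) ⬝ᵥ (u k) = 1 := by
    intro k
    have horth' : Uᵀ * U = 1 := mul_eq_one_comm.mp horth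
    have := congrFun (congrFun horth' k) k
    simpa [Matrix.mul_apply, dotProduct, hu, Matrix.one_apply] using this
  have hdot : ((d i * Real.sqrt (-(ev (c i)))) • u (c i)) ⬝ᵥ
      ((d i * Real.sqrt (-(ev (c i)))) • u (c i)) = -(ev (c i)) := by
    rw [smul_dotProduct, dotProduct_smul, huu, smul_eq_mul, smul_eq_mul, mul_one,
      ← sq, hsq]
  -- part 1 : the matrix identity
  have h1 : (∑ j ∈ Finset.univ.filter (· ≤ i),
        vecMulVec ((d j * Real.sqrt (-(ev (c j)))) • u (c j))
          ((d j * Real.sqrt (-(ev (c j)))) • u (c j)))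
      = -(∑ j ∈ Finset.univ.filter (· ≤ i),
            ev (c j) • vecMulVec (u (c j)) (u (c j))) := by
    rw [← Finset.sum_neg_distrib]
    exact Finset.sum_congr rfl fun j _ => by rw [hvmv j, neg_smul]
  have hJeq :
      A + (∑ j ∈ Finset.univ.filter (· ≤ i),
            vecMulVec ((d j * Real.sqrt (-(ev (c j)))) • u (c j))
              ((d j * Real.sqrt (-(ev (c j)))) • u (c j)))
          + (((d i * Real.sqrt (-(ev (c i)))) • u (c i)) ⬝ᵥ
              ((d i * Real.sqrt (-(ev (c i)))) • u (c i))) • (1 : Matrix (Fin n) (Fin n) ℝ)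
          + vecMulVec ((d i * Real.sqrt (-(ev (c i)))) • u (c i))
              ((d i * Real.sqrt (-(ev (c i)))) • u (c i))
      = A - (∑ j ∈ Finset.univ.filter (· ≤ i),
              ev (c j) • vecMulVec (u (c j)) (u (c j)))
          - ev (c i) • (1 : Matrix (Fin n) (Fin n) ℝ)
          - ev (c i) • vecMulVec (u (c i)) (u (c i)) := by
    rw [h1, hdot, hvmv i, neg_smul, neg_smul]
    abel
  refine ⟨hJeq, ?_⟩
  rw [hJeq]
  -- part 2 : positive definiteness
  set β : Fin n → ℝ := fun k =>
    ev k - (∑ j ∈ Finset.univ.filter (· ≤ i), ev (c j) * (if k = c j then 1 else 0))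
      - ev (c i) - (if k = c i then ev (c i) else 0) with hβ
  have hβdiag : diagonal β
      = diagonal ev
        - (∑ j ∈ Finset.univ.filter (· ≤ i),
            ev (c j) • diagonal (fun k => if k = c j then (1:ℝ) else 0))
        - ev (c i) • (1 : Matrix (Fin n) (Fin n) ℝ)
        - ev (c i) • diagonal (fun k => if k = c i then (1:ℝ) else 0) := by
    ext a b
    by_cases h : a = b
    · subst h
      simp [hβ, Matrix.diagonal_apply_eq, Matrix.sub_apply, Matrix.sum_apply,
        Matrix.smul_apply, Matrix.one_apply_eq, mul_ite, smul_eq_mul]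
    · simp [Matrix.diagonal_apply_ne _ h, Matrix.sub_apply, Matrix.sum_apply,
        Matrix.smul_apply, Matrix.one_apply_ne h]
  have hRHS :
      A - (∑ j ∈ Finset.univ.filter (· ≤ i),
              ev (c j) • vecMulVec (u (c j)) (u (c j)))
          - ev (c i) • (1 : Matrix (Fin n) (Fin n) ℝ)
          - ev (c i) • vecMulVec (u (c i)) (u (c i))
      = U * diagonal β * Uᵀ := by
    have hP : ∀ k0 : Fin n, vecMulVec (u k0) (u k0)
        = U * diagonal (fun k => if k = k0 then (1:ℝ) else 0) * Uᵀ :=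
      fun k0 => (conj_single U k0).symm
    have hone : (1 : Matrix (Fin n) (Fin n) ℝ) = U * (1 : Matrix (Fin n) (Fin n) ℝ) * Uᵀ := by
      rw [mul_one, horth]
    calc A - (∑ j ∈ Finset.univ.filter (· ≤ i),
              ev (c j) • vecMulVec (u (c j)) (u (c j)))
          - ev (c i) • (1 : Matrix (Fin n) (Fin n) ℝ)
          - ev (c i) • vecMulVec (u (c i)) (u (c i))
        = U * diagonal ev * Uᵀ
          - (∑ j ∈ Finset.univ.filter (· ≤ i),
              ev (c j) • (U * diagonal (fun k => if k = c j then (1:ℝ) else 0) * Uᵀ))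
          - ev (c i) • (U * (1 : Matrix (Fin n) (Fin n) ℝ) * Uᵀ)
          - ev (c i) • (U * diagonal (fun k => if k = c i then (1:ℝ) else 0) * Uᵀ) := by
          rw [← hdecomp, ← hone, ← hP (c i)]
          congr 3
          exact Finset.sum_congr rfl fun j _ => by rw [hP (c j)]
      _ = U * diagonal β * Uᵀ := by
          rw [hβdiag]
          simp only [Matrix.mul_sub, Matrix.sub_mul, Matrix.mul_smul, Matrix.smul_mul,
            Finset.mul_sum, Finset.sum_mul]
  rw [hRHS]
  apply conj_posDef horth
  intro k
  rw [hβ]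
  dsimp only
  by_cases hk : (k : ℕ) ≤ (i : ℕ)
  · have hkp : (k : ℕ) < p := lt_of_le_of_lt hk i.isLt
    set j0 : Fin p := ⟨k, hkp⟩ with hj0
    have hcj0 : c j0 = k := by
      apply Fin.ext
      simp [hc, hj0]
    have hsum : (∑ j ∈ Finset.univ.filter (· ≤ i),
        ev (c j) * (if k = c j then 1 else 0)) = ev k := by
      rw [Finset.sum_eq_single j0]
      · simp [hcj0]
      · intro j hj hne
        have hkc : k ≠ c j := by
          intro h
          apply hne
          have : c j = c j0 := by rw [hcj0, ← h]
          exact Fin.castLE_injective hpn this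
        simp [hkc]
      · intro h
        exact absurd (Finset.mem_filter.mpr ⟨Finset.mem_univ _, by
          show j0 ≤ i
          exact Fin.mk_le_of_le_val hk⟩) h
    rw [hsum]
    by_cases hki : k = c i
    · rw [if_pos hki]
      have : ev k = ev (c i) := by rw [hki]
      rw [this]
      linarith [hevneg i]
    · rw [if_neg hki]
      linarith [hevneg i]
  · push_neg at hk
    have hsum : (∑ j ∈ Finset.univ.filter (· ≤ i),
        ev (c j) * (if k = c j then 1 else 0)) = 0 := by
      apply Finset.sum_eq_zero
      intro j hj
      have hji : j ≤ i := (Finset.mem_filter.mp hj).2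
      have hkc : k ≠ c j := by
        intro h
        have : (k : ℕ) = (j : ℕ) := by rw [h]; simp [hc]
        omega
      simp [hkc]
    have hki : k ≠ c i := by
      intro h
      have : (k : ℕ) = (i : ℕ) := by rw [h]; simp [hc]
      omega
    rw [hsum, if_neg hki]
    have hlt2 : ev (c i) < ev k := by
      apply hsimple (c i) k (hlt i)
      rw [Fin.lt_def]
      simpa [hc] using hk
    linarith
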